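/- Let G = (V,E) be a finite simple graph with unit-length edges in which any two distinct vertices are at distance at most two, let s,t ∈ V be distinct, let ℓ ≥ 5 and k ∈ ℕ. Then there exists an edge set S ⊆ E with |S| ≤ k and dist_{G−S}(s,t) ≥ ℓ if and only if k ≥ min{deg_G(s), deg_G(t)}. -/

import Mathlib

open SimpleGraph

/-- The one-sided counting (injection) lemma: if all short connections from `t`'s
neighborhood are blocked by edges of `S` in the structured way described by the
hypotheses, then `S` has at least `deg t` edges. -/
private lemma aux_side {V : Type*} [Fintype V] (G : SimpleGraph V) [DecidableRel G.Adj]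
    (s t : V) (S : Finset (Sym2 V))
    (hts : G.Adj s t → s(s, t) ∈ S)
    (h2 : ∀ v, G.Adj t v → s(t, v) ∉ S → G.Adj s v → s(s, v) ∈ S)
    (hP : ∀ v, G.Adj t v → s(t, v) ∉ S → ¬G.Adj s v →
      (∀ w, G.Adj s w → G.Adj w v → s(w, v) ∉ S) →
      ∃ x, ¬(G.Adj t x ∧ s(t, x) ∉ S) ∧ x ≠ s ∧ x ≠ t ∧ s(x, v) ∈ S) :
    G.degree t ≤ S.card := by
  classical
  have hex : ∀ v : V, ∃ x : V, G.Adj t v →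
      (s(x, v) ∈ S ∧
        (x = t ∨
         (x = s ∧ s(t, v) ∉ S) ∨
         (G.Adj s x ∧ s(t, v) ∉ S ∧ ¬G.Adj s v) ∨
         (¬(G.Adj t x ∧ s(t, x) ∉ S) ∧ x ≠ s ∧ x ≠ t ∧ s(t, v) ∉ S ∧ ¬G.Adj s v))) := by
    intro v
    by_cases htv : G.Adj t v
    · by_cases h1 : s(t, v) ∈ S
      · exact ⟨t, fun _ => ⟨h1, Or.inl rfl⟩⟩
      · by_cases hsv : G.Adj s v
        · exact ⟨s, fun _ => ⟨h2 v htv h1 hsv, Or.inr (Or.inl ⟨rfl, h1⟩)⟩⟩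
        · by_cases h3 : ∃ w, G.Adj s w ∧ G.Adj w v ∧ s(w, v) ∈ S
          · obtain ⟨w, hw1, _, hw3⟩ := h3
            exact ⟨w, fun _ => ⟨hw3, Or.inr (Or.inr (Or.inl ⟨hw1, h1, hsv⟩))⟩⟩
          · push_neg at h3
            obtain ⟨x, hx1, hx2, hx3, hx4⟩ :=
              hP v htv h1 hsv (fun w hw1 hw2 => h3 w hw1 hw2)
            exact ⟨x, fun _ => ⟨hx4, Or.inr (Or.inr (Or.inr ⟨hx1, hx2, hx3, h1, hsv⟩))⟩⟩
    · exact ⟨t, fun h => absurd h htv⟩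
  choose g hg using hex
  rw [← card_neighborFinset_eq_degree]
  apply Finset.card_le_card_of_injOn (fun v => s(g v, v))
  · intro v hv
    rw [Finset.mem_coe, mem_neighborFinset] at hv
    exact (hg v hv).1
  · intro v hv v' hv' heq
    rw [Finset.mem_coe, mem_neighborFinset] at hv hv'
    simp only [Sym2.eq_iff] at heq
    rcases heq with ⟨-, h⟩ | ⟨h1, h2'⟩
    · exact h
    -- h1 : g v = v', h2' : v = g v'
    exfalso
    have hR := (hg v hv).2
    have hR' := (hg v' hv').2
    -- helper: if v = s then s(t, v) ∈ S
    have hvs : ∀ u : V, G.Adj t u → u = s → s(t, u) ∈ S := by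
      intro u hu hus
      subst hus
      have := hts hu.symm
      rwa [Sym2.eq_swap] at this
    rcases hR with hA | ⟨hBs, hBn⟩ | ⟨hCs, hCn, hCnsv⟩ | ⟨hDn, _, _, hDtv, hDsv⟩
    · -- g v = t, so v' = t
      rw [hA] at h1
      exact G.irrefl (h1 ▸ hv')
    · -- g v = s, so v' = s
      rw [hBs] at h1
      have hmem : s(t, v') ∈ S := hvs v' hv' h1.symm
      rcases hR' with hA' | ⟨_, hn'⟩ | ⟨_, hn', _⟩ | ⟨_, _, _, hn', _⟩
      · rw [hA'] at h2'; exact G.irrefl (h2' ▸ hv)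
      · exact hn' hmem
      · exact hn' hmem
      · exact hn' hmem
    · -- G.Adj s (g v), g v = v'
      have hsv' : G.Adj s v' := h1 ▸ hCs
      rcases hR' with hA' | ⟨hB's, _⟩ | ⟨_, _, hn'⟩ | ⟨_, _, _, _, hn'⟩
      · rw [hA'] at h2'; exact G.irrefl (h2' ▸ hv)
      · -- g v' = s, so v = s
        rw [hB's] at h2'
        exact hCn (hvs v hv h2')
      · exact hn' hsv'
      · exact hn' hsv'
    · -- ¬(G.Adj t (g v) ∧ s(t, g v) ∉ S), g v = v'
      have hnv' : ¬(G.Adj t v' ∧ s(t, v') ∉ S) := h1 ▸ hDn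
      rcases hR' with hA' | ⟨hB's, _⟩ | ⟨_, hn', _⟩ | ⟨_, _, _, hn', _⟩
      · rw [hA'] at h2'; exact G.irrefl (h2' ▸ hv)
      · rw [hB's] at h2'
        exact hDtv (hvs v hv h2')
      · exact hnv' ⟨hv', hn'⟩
      · exact hnv' ⟨hv', hn'⟩

/-- **SP-MVE on graphs of diameter at most two (unit lengths).**
Let `G` be a finite simple graph in which any two distinct vertices are at
distance at most two, let `s ≠ t`, `ℓ ≥ 5` and `k ∈ ℕ`. Then there is an edge
set `S ⊆ E` with `|S| ≤ k` and `dist_{G−S}(s,t) ≥ ℓ` (distance `+∞` when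
disconnected, via `edist`) iff `k ≥ min{deg_G(s), deg_G(t)}`. -/
theorem stmt7 {V : Type*} [Fintype V] (G : SimpleGraph V) [DecidableRel G.Adj]
    (hdiam : ∀ u v : V, u ≠ v → G.edist u v ≤ 2)
    (s t : V) (hst : s ≠ t) (k ℓ : ℕ) (hℓ : 5 ≤ ℓ) :
    (∃ S : Finset (Sym2 V), ↑S ⊆ G.edgeSet ∧ S.card ≤ k ∧
        (ℓ : ℕ∞) ≤ (G.deleteEdges ↑S).edist s t) ↔
    min (G.degree s) (G.degree t) ≤ k := by
  classical
  constructor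
  · rintro ⟨S, hsub, hcard, hdist⟩
    set H := G.deleteEdges (↑S : Set (Sym2 V)) with hH
    have h5 : (5 : ℕ∞) ≤ H.edist s t := by
      refine le_trans ?_ hdist
      exact_mod_cast hℓ
    have hadjH : ∀ a b : V, G.Adj a b → s(a, b) ∉ S → H.Adj a b := by
      intro a b hab hnab
      rw [hH, deleteEdges_adj]
      exact ⟨hab, by simpa using hnab⟩
    have hmemS : ∀ a b : V, H.Adj a b → False → True := fun _ _ _ _ => trivial
    have hlen : ∀ p : H.Walk s t, 5 ≤ p.length := by
      intro p
      have h1 : (5 : ℕ∞) ≤ (p.length : ℕ∞) := le_trans h5 (H.edist_le p)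
      exact_mod_cast h1
    have nsp1 : ¬H.Adj s t := by
      intro h
      have := hlen (Walk.cons h Walk.nil)
      simp at this
    have nsp2 : ∀ w, H.Adj s w → ¬H.Adj w t := by
      intro w h1 h2
      have := hlen (Walk.cons h1 (Walk.cons h2 Walk.nil))
      simp at this
    have nsp3 : ∀ w x, H.Adj s w → H.Adj w x → ¬H.Adj x t := by
      intro w x h1 h2 h3
      have := hlen (Walk.cons h1 (Walk.cons h2 (Walk.cons h3 Walk.nil)))
      simp at this
    have nsp4 : ∀ w x y, H.Adj s w → H.Adj w x → H.Adj x y → ¬H.Adj y t := by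
      intro w x y h1 h2 h3 h4
      have := hlen (Walk.cons h1 (Walk.cons h2 (Walk.cons h3 (Walk.cons h4 Walk.nil))))
      simp at this
    have htwo : ∀ u v : V, u ≠ v → ¬G.Adj u v → ∃ w, G.Adj u w ∧ G.Adj w v := by
      intro u v hne hadj
      have hd := hdiam u v hne
      have hnt : G.edist u v ≠ ⊤ := by
        intro h
        rw [h] at hd
        exact absurd hd (by simp)
      obtain ⟨p, hp⟩ := exists_walk_of_edist_ne_top hnt
      have hplen : p.length ≤ 2 := by
        have : (p.length : ℕ∞) ≤ 2 := hp ▸ hd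
        exact_mod_cast this
      cases p with
      | nil => exact absurd rfl hne
      | cons h q =>
        cases q with
        | nil => exact absurd h hadj
        | cons h' q' =>
          cases q' with
          | nil => exact ⟨_, h, h'⟩
          | cons h'' q'' => simp at hplen
    -- basic blocked-edge facts
    have hts : G.Adj s t → s(s, t) ∈ S := by
      intro h
      by_contra hn
      exact nsp1 (hadjH s t h hn)
    suffices hmain : min (G.degree s) (G.degree t) ≤ S.card by exact le_trans hmain hcard
    by_cases hQ : ∀ v, H.Adj t v → ¬G.Adj s v →
        (∀ w, G.Adj s w → G.Adj w v → s(w, v) ∉ S) →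
        ∃ x, ¬H.Adj t x ∧ x ≠ s ∧ x ≠ t ∧ s(x, v) ∈ S
    · -- t-side injection succeeds
      refine le_trans (min_le_right _ _) (aux_side G s t S hts ?_ ?_)
      · intro v htv hntv hsv
        by_contra hn
        exact nsp2 v (hadjH s v hsv hn)
          ((hadjH t v htv hntv).symm)
      · intro v htv hntv hsv hC
        obtain ⟨x, hx1, hx2, hx3, hx4⟩ := hQ v (hadjH t v htv hntv) hsv hC
        refine ⟨x, ?_, hx2, hx3, hx4⟩
        intro ⟨ha, hb⟩
        exact hx1 (hadjH t x ha hb)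
    · -- some v₀ in class C has no escape edge; then the s-side injection succeeds
      push_neg at hQ
      obtain ⟨v₀, hv₀B, hv₀ns, hv₀C, hv₀no⟩ := hQ
      have hv₀t : H.Adj v₀ t := hv₀B.symm
      refine le_trans (min_le_left _ _) (aux_side G t s S (fun h => by
        have := hts h.symm; rwa [Sym2.eq_swap] at this) ?_ ?_)
      · -- symmetric class-2
        intro u hsu hnsu htu
        by_contra hn
        exact nsp2 u (hadjH s u hsu hnsu)
          ((hadjH t u htu hn).symm)
      · -- symmetric class-C existence, from ¬hQ
        intro u hsu hnsu hntu _
        have hHsu : H.Adj s u := hadjH s u hsu hnsu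
        have hune : u ≠ v₀ := by
          rintro rfl
          exact nsp2 u hHsu hv₀t
        have hnuv₀ : ¬G.Adj u v₀ := by
          intro hG
          have hnS : s(u, v₀) ∉ S := hv₀C u (hsu) hG
          exact nsp3 u v₀ hHsu (hadjH u v₀ hG hnS) hv₀t
        obtain ⟨w, hw1, hw2⟩ := htwo u v₀ hune hnuv₀
        have hws : w ≠ s := by
          rintro rfl
          exact hv₀ns hw2
        have hwt : w ≠ t := by
          rintro rfl
          exact hntu hw1.symm
        have hwu : s(w, u) ∈ S := by
          by_contra hn
          have hHuw : H.Adj u w := hadjH u w hw1 (by rwa [Sym2.eq_swap] at hn)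
          have hwv₀S : s(w, v₀) ∈ S := by
            by_contra hn2
            exact nsp4 u w v₀ hHsu hHuw (hadjH w v₀ hw2 hn2) hv₀t
          have hnHtw : ¬H.Adj t w := by
            intro h
            exact nsp3 u w hHsu hHuw h.symm
          exact hv₀no w hnHtw hws hwt hwv₀S
        refine ⟨w, ?_, hwt, hws, hwu⟩
        rintro ⟨ha, hb⟩
        have hHsw : H.Adj s w := hadjH s w ha hb
        have hnS : s(w, v₀) ∉ S := hv₀C w ha hw2
        exact nsp3 w v₀ hHsw (hadjH w v₀ hw2 hnS) hv₀t
  · -- easy direction: delete all edges at s (or at t)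
    intro hk
    rcases le_total (G.degree s) (G.degree t) with hd | hd
    · refine ⟨G.incidenceFinset s, ?_, ?_, ?_⟩
      · intro e he
        rw [Finset.mem_coe, mem_incidenceFinset] at he
        exact G.incidenceSet_subset s he
      · rw [card_incidenceFinset_eq_degree]
        rwa [min_eq_left hd] at hk
      · have hiso : ∀ w, ¬(G.deleteEdges (↑(G.incidenceFinset s) : Set (Sym2 V))).Adj s w := by
          intro w h
          rw [deleteEdges_adj] at h
          refine h.2 ?_
          rw [Finset.mem_coe, mem_incidenceFinset, mk'_mem_incidenceSet_iff]
          exact ⟨h.1, Or.inl rfl⟩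
        have hnr : ¬(G.deleteEdges (↑(G.incidenceFinset s) : Set (Sym2 V))).Reachable s t := by
          rintro ⟨p⟩
          cases p with
          | nil => exact hst rfl
          | cons h q => exact hiso _ h
        rw [edist_eq_top_of_not_reachable hnr]
        exact le_top
    · refine ⟨G.incidenceFinset t, ?_, ?_, ?_⟩
      · intro e he
        rw [Finset.mem_coe, mem_incidenceFinset] at he
        exact G.incidenceSet_subset t he
      · rw [card_incidenceFinset_eq_degree]
        rwa [min_eq_right hd] at hk
      · have hiso : ∀ w, ¬(G.deleteEdges (↑(G.incidenceFinset t) : Set (Sym2 V))).Adj w t := by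
          intro w h
          rw [deleteEdges_adj] at h
          refine h.2 ?_
          rw [Finset.mem_coe, mem_incidenceFinset, mk'_mem_incidenceSet_iff]
          exact ⟨h.1, Or.inr rfl⟩
        have hnr : ¬(G.deleteEdges (↑(G.incidenceFinset t) : Set (Sym2 V))).Reachable s t := by
          rintro ⟨p⟩
          cases p using SimpleGraph.Walk.concatRec with
          | Hnil => exact hst rfl
          | Hconcat q h => exact hiso _ h
        rw [edist_eq_top_of_not_reachable hnr]
        exact le_top
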